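/- If B = (b_1, ..., b_n) is a non-decreasing integer sequence and M = (m_1, ..., m_n) is a strictly increasing integer sequence, then the number of pairs i < j with b_i = b_j is at most 2·Σ_{i=1}^n |b_i - m_i|. -/

import Mathlib

/-- If `b` is non-decreasing and `m` is strictly increasing, then the number of tied pairs
`i < j` with `b i = b j` is at most twice the ℓ1 distance from `b` to `m`. -/
theorem ties_le_two_cost (n : ℕ) (b m : Fin n → ℤ) (hb : Monotone b) (hm : StrictMono m) :
    ((Finset.univ.filter (fun p : Fin n × Fin n => p.1 < p.2 ∧ b p.1 = b p.2)).card : ℤ)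
      ≤ 2 * ∑ i, |b i - m i| := by
  classical
  set c : Fin n → ℤ := fun i => |b i - m i| with hc
  set S := (Finset.univ.filter (fun p : Fin n × Fin n => p.1 < p.2 ∧ b p.1 = b p.2)) with hS
  set f : Fin n × Fin n → Fin n := fun p => if c p.1 ≤ c p.2 then p.2 else p.1 with hf
  have hmem : ∀ p ∈ S, f p ∈ (Finset.univ : Finset (Fin n)) := fun _ _ => Finset.mem_univ _
  have hcard := Finset.card_eq_sum_card_fiberwise hmem
  have hfib : ∀ k : Fin n, ((S.filter (fun p => f p = k)).card : ℤ) ≤ 2 * c k := by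
    intro k
    have hck : 0 ≤ c k := abs_nonneg _
    have hmk : m k ∈ Finset.Icc (b k - c k) (b k + c k) := by
      rw [Finset.mem_Icc]
      have := abs_le.mp (le_refl (c k))
      constructor <;> linarith [this.1, this.2]
    have hinj : ((S.filter (fun p => f p = k)).card
        ≤ ((Finset.Icc (b k - c k) (b k + c k)).erase (m k)).card) := by
      apply Finset.card_le_card_of_injOn
        (fun p => m (if c p.1 ≤ c p.2 then p.1 else p.2))
      · intro p hp
        simp only [Finset.mem_coe, Finset.mem_filter, hS, Finset.mem_univ, true_and] at hp ⊢
        obtain ⟨⟨hlt, hbe⟩, hfp⟩ := hp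
        by_cases h : c p.1 ≤ c p.2
        · have hk : p.2 = k := by simpa [hf, h] using hfp
          have hbk : b p.1 = b k := by rw [hbe, hk]
          have hcle : c p.1 ≤ c k := hk ▸ h
          have habs : |b k - m p.1| ≤ c k := by
            rw [← hbk]; exact hcle
          have hne : m p.1 ≠ m k := by
            intro he
            have h' := hm.injective he
            rw [← hk] at h'
            exact absurd h' (ne_of_lt hlt)
          rw [if_pos h, Finset.mem_erase]
          refine ⟨hne, ?_⟩
          rw [Finset.mem_Icc]
          have := abs_le.mp habs
          constructor <;> linarith [this.1, this.2]
        · have hk : p.1 = k := by simpa [hf, h] using hfp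
          have hbk : b p.2 = b k := by rw [← hbe, hk]
          have hcle : c p.2 ≤ c k := hk ▸ le_of_lt (lt_of_not_ge h)
          have habs : |b k - m p.2| ≤ c k := by rw [← hbk]; exact hcle
          have hne : m p.2 ≠ m k := by
            intro he
            have h' := hm.injective he
            rw [← hk] at h'
            exact absurd h'.symm (ne_of_lt hlt)
          rw [if_neg h, Finset.mem_erase]
          refine ⟨hne, ?_⟩
          rw [Finset.mem_Icc]
          have := abs_le.mp habs
          constructor <;> linarith [this.1, this.2]
      · intro p hp q hq he
        simp only [Finset.mem_coe, Finset.mem_filter, hS, Finset.mem_univ, true_and] at hp hq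
        obtain ⟨⟨hltp, _⟩, hfp⟩ := hp
        obtain ⟨⟨hltq, _⟩, hfq⟩ := hq
        have he' : (if c p.1 ≤ c p.2 then p.1 else p.2)
            = (if c q.1 ≤ c q.2 then q.1 else q.2) := hm.injective he
        by_cases h1 : c p.1 ≤ c p.2 <;> by_cases h2 : c q.1 ≤ c q.2
        · have e1 : p.2 = k := by simpa [hf, h1] using hfp
          have e2 : q.2 = k := by simpa [hf, h2] using hfq
          have e3 : p.1 = q.1 := by simpa [h1, h2] using he'
          exact Prod.ext e3 (e1.trans e2.symm)
        · have e1 : p.2 = k := by simpa [hf, h1] using hfp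
          have e2 : q.1 = k := by simpa [hf, h2] using hfq
          have e3 : p.1 = q.2 := by simpa [h1, h2] using he'
          exfalso
          have l1 : p.1 < k := by rw [← e1]; exact hltp
          have l2 : k < p.1 := by rw [← e2, e3]; exact hltq
          exact absurd l2 (not_lt.mpr l1.le)
        · have e1 : p.1 = k := by simpa [hf, h1] using hfp
          have e2 : q.2 = k := by simpa [hf, h2] using hfq
          have e3 : p.2 = q.1 := by simpa [h1, h2] using he'
          exfalso
          have l1 : q.1 < k := by rw [← e2]; exact hltq
          have l2 : k < q.1 := by rw [← e1, ← e3]; exact hltp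
          exact absurd l2 (not_lt.mpr l1.le)
        · have e1 : p.1 = k := by simpa [hf, h1] using hfp
          have e2 : q.1 = k := by simpa [hf, h2] using hfq
          have e3 : p.2 = q.2 := by simpa [h1, h2] using he'
          exact Prod.ext (e1.trans e2.symm) e3
    have hicc : (((Finset.Icc (b k - c k) (b k + c k)).erase (m k)).card : ℤ) = 2 * c k := by
      rw [Finset.card_erase_of_mem hmk, Int.card_Icc]
      have : (b k + c k + 1 - (b k - c k)) = 2 * c k + 1 := by ring
      rw [this]
      have h1 : ((2 * c k + 1).toNat : ℤ) = 2 * c k + 1 := Int.toNat_of_nonneg (by linarith)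
      omega
    calc ((S.filter (fun p => f p = k)).card : ℤ)
        ≤ (((Finset.Icc (b k - c k) (b k + c k)).erase (m k)).card : ℤ) := by exact_mod_cast hinj
      _ = 2 * c k := hicc
  calc (S.card : ℤ) = ∑ k, ((S.filter (fun p => f p = k)).card : ℤ) := by
        rw [hcard]; push_cast; ring
    _ ≤ ∑ k, 2 * c k := Finset.sum_le_sum (fun k _ => hfib k)
    _ = 2 * ∑ i, c i := by rw [Finset.mul_sum]
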